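/- Let k ≥ 2, μ > 0, and m a positive integer, and set η = 3^{−⌈log₂ m⌉ − 1}. There exists an integer n₀ such that for any finite set V with |V| > n₀, if S_1, ..., S_m are (μ, η)-good subsets of the (k−1)-subsets of V, then the intersection S_1 ∩ ... ∩ S_m is nonempty. -/

import Mathlib

open Finset

/-- `A` is a `(μ, η)`-good subset of the `(k-1)`-subsets of the finite set `V`. -/
def IsGood {α : Type*} [DecidableEq α] (V : Finset α) (k : ℕ) (μ η : ℝ)
    (A : Finset (Finset α)) : Prop :=
  ∃ (t : ℕ) (P : Fin t → Finset α),
    (∀ i, P i ⊆ V) ∧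
    (∀ i j, i ≠ j → Disjoint (P i) (P j)) ∧
    (∀ i, ∀ e ⊆ P i, e.card = k - 1 → e ∈ A) ∧
    (∀ i, μ * (V.card : ℝ) ≤ ((P i).card : ℝ)) ∧
    (((V \ Finset.univ.biUnion P).card : ℝ) ≤ η * (V.card : ℝ))

/-- Finset-family version of `IsGood`. -/
def IsGoodF {α : Type*} [DecidableEq α] (V : Finset α) (k : ℕ) (μ η : ℝ)
    (A : Finset (Finset α)) : Prop :=
  ∃ F : Finset (Finset α),
    (∀ P ∈ F, P ⊆ V) ∧
    (∀ P ∈ F, ∀ Q ∈ F, P ≠ Q → Disjoint P Q) ∧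
    (∀ P ∈ F, ∀ e ⊆ P, e.card = k - 1 → e ∈ A) ∧
    (∀ P ∈ F, μ * (V.card : ℝ) ≤ ((P).card : ℝ)) ∧
    (((V \ F.biUnion id).card : ℝ) ≤ η * (V.card : ℝ))

lemma isGood_iff_isGoodF {α : Type*} [DecidableEq α] (V : Finset α) (k : ℕ) (μ η : ℝ)
    (A : Finset (Finset α)) : IsGood V k μ η A ↔ IsGoodF V k μ η A := by
  constructor
  · rintro ⟨t, P, h1, h2, h3, h4, h5⟩
    refine ⟨Finset.univ.image P, ?_, ?_, ?_, ?_, ?_⟩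
    · rintro B hB
      obtain ⟨i, -, rfl⟩ := mem_image.1 hB
      exact h1 i
    · rintro B hB C hC hne
      obtain ⟨i, -, rfl⟩ := mem_image.1 hB
      obtain ⟨j, -, rfl⟩ := mem_image.1 hC
      exact h2 i j (fun h => hne (by rw [h]))
    · rintro B hB e he hcard
      obtain ⟨i, -, rfl⟩ := mem_image.1 hB
      exact h3 i e he hcard
    · rintro B hB
      obtain ⟨i, -, rfl⟩ := mem_image.1 hB
      exact h4 i
    · have : (Finset.univ.image P).biUnion id = Finset.univ.biUnion P := by
        ext a
        simp only [mem_biUnion, mem_image, mem_univ, true_and, id]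
        constructor
        · rintro ⟨B, ⟨i, rfl⟩, h⟩; exact ⟨i, h⟩
        · rintro ⟨i, h⟩; exact ⟨P i, ⟨i, rfl⟩, h⟩
      rwa [this]
  · rintro ⟨F, h1, h2, h3, h4, h5⟩
    refine ⟨F.card, fun i => ((F.equivFin.symm i : {x // x ∈ F}) : Finset α), ?_, ?_, ?_, ?_, ?_⟩
    · intro i; exact h1 _ (F.equivFin.symm i).2
    · intro i j hij
      refine h2 _ (F.equivFin.symm i).2 _ (F.equivFin.symm j).2 ?_
      intro h
      exact hij (F.equivFin.symm.injective (Subtype.ext h))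
    · intro i e he hcard; exact h3 _ (F.equivFin.symm i).2 e he hcard
    · intro i; exact h4 _ (F.equivFin.symm i).2
    · have : Finset.univ.biUnion (fun i => ((F.equivFin.symm i : {x // x ∈ F}) : Finset α))
          = F.biUnion id := by
        ext a
        simp only [mem_biUnion, mem_univ, true_and, id]
        constructor
        · rintro ⟨i, h⟩; exact ⟨_, (F.equivFin.symm i).2, h⟩
        · rintro ⟨B, hB, h⟩
          exact ⟨F.equivFin ⟨B, hB⟩, by simpa using h⟩
      rwa [this]

lemma isGood_mono {α : Type*} [DecidableEq α] {V : Finset α} {k : ℕ} {μ μ' η η' : ℝ}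
    {A : Finset (Finset α)} (hμ : μ' ≤ μ) (hη : η ≤ η') (h : IsGood V k μ η A) :
    IsGood V k μ' η' A := by
  obtain ⟨t, P, h1, h2, h3, h4, h5⟩ := h
  refine ⟨t, P, h1, h2, h3, fun i => le_trans ?_ (h4 i), le_trans h5 ?_⟩
  · exact mul_le_mul_of_nonneg_right hμ (Nat.cast_nonneg _)
  · exact mul_le_mul_of_nonneg_right hη (Nat.cast_nonneg _)

lemma isGood_inter {α : Type*} [DecidableEq α] {V : Finset α} {k : ℕ} {μ η : ℝ}
    (hμ : 0 < μ) (hη : 0 < η) {A B : Finset (Finset α)}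
    (hA : IsGood V k μ η A) (hB : IsGood V k μ η B) :
    IsGood V k (η * μ ^ 2) (3 * η) (A ∩ B) := by
  classical
  rw [isGood_iff_isGoodF] at hA hB ⊢
  rcases Nat.eq_zero_or_pos V.card with hV | hV
  · refine ⟨∅, by simp, by simp, by simp, by simp, ?_⟩
    rw [Finset.card_eq_zero] at hV
    simp [hV]
  obtain ⟨FA, hA1, hA2, hA3, hA4, hA5⟩ := hA
  obtain ⟨FB, hB1, hB2, hB3, hB4, hB5⟩ := hB
  have hn : (0 : ℝ) < V.card := by exact_mod_cast hV
  -- card bounds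
  have hcardbound : ∀ (F : Finset (Finset α)), (∀ P ∈ F, P ⊆ V) →
      (∀ P ∈ F, ∀ Q ∈ F, P ≠ Q → Disjoint P Q) →
      (∀ P ∈ F, μ * (V.card : ℝ) ≤ ((P).card : ℝ)) →
      (F.card : ℝ) * (μ * V.card) ≤ V.card := by
    intro F h1 h2 h4
    have hsub : F.biUnion id ⊆ V := biUnion_subset.2 h1
    have hcards : (F.biUnion id).card = ∑ P ∈ F, P.card := card_biUnion h2
    have hsum : (∑ P ∈ F, (P.card : ℝ)) ≤ V.card := by
      have := card_le_card hsub
      rw [hcards] at this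
      exact_mod_cast this
    have hsmul : F.card • (μ * (V.card : ℝ)) ≤ ∑ P ∈ F, (P.card : ℝ) :=
      Finset.card_nsmul_le_sum F _ _ h4
    rw [nsmul_eq_mul] at hsmul
    linarith
  have hcA : (FA.card : ℝ) * (μ * V.card) ≤ V.card := hcardbound FA hA1 hA2 hA4
  have hcB : (FB.card : ℝ) * (μ * V.card) ≤ V.card := hcardbound FB hB1 hB2 hB4
  set Ffil : Finset (Finset α × Finset α) :=
    (FA ×ˢ FB).filter (fun p => ¬ η * μ ^ 2 * (V.card : ℝ) ≤ ((p.1 ∩ p.2).card : ℝ)) with hFfil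
  set D : Finset α := Ffil.biUnion (fun p => p.1 ∩ p.2) with hD
  set C : Finset (Finset α) :=
    ((FA ×ˢ FB).image (fun p => p.1 ∩ p.2)).filter
      (fun Q => η * μ ^ 2 * (V.card : ℝ) ≤ (Q.card : ℝ)) with hC
  have key : (FA.card : ℝ) * FB.card * (η * μ ^ 2 * V.card) ≤ η * V.card := by
    have h1 : ((FA.card : ℝ) * (μ * V.card)) * ((FB.card : ℝ) * (μ * V.card)) ≤
        V.card * V.card := by
      apply mul_le_mul hcA hcB (by positivity) hn.le
    have h2 : ((FA.card : ℝ) * FB.card * (μ ^ 2 * V.card)) * V.card ≤ V.card * V.card := by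
      nlinarith [h1]
    have h3 : (FA.card : ℝ) * FB.card * (μ ^ 2 * V.card) ≤ V.card :=
      (mul_le_mul_iff_of_pos_right hn).1 (by nlinarith [h2])
    nlinarith [mul_le_mul_of_nonneg_left h3 hη.le]
  refine ⟨C, ?_, ?_, ?_, ?_, ?_⟩
  · intro P hP
    obtain ⟨⟨p, hp, rfl⟩, -⟩ := mem_filter.1 hP |>.imp (fun h => mem_image.1 h) id
    exact fun x hx => hA1 _ (mem_product.1 hp).1 (mem_inter.1 hx).1
  · intro P hP Q hQ hne
    obtain ⟨p, hp, rfl⟩ := mem_image.1 (mem_filter.1 hP).1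
    obtain ⟨q, hq, rfl⟩ := mem_image.1 (mem_filter.1 hQ).1
    rcases eq_or_ne p.1 q.1 with h1 | h1
    · have h2 : p.2 ≠ q.2 := fun h2 => hne (by rw [h1, h2])
      exact Disjoint.mono inter_subset_right inter_subset_right
        (hB2 _ (mem_product.1 hp).2 _ (mem_product.1 hq).2 h2)
    · exact Disjoint.mono inter_subset_left inter_subset_left
        (hA2 _ (mem_product.1 hp).1 _ (mem_product.1 hq).1 h1)
  · intro P hP e he hcard
    obtain ⟨p, hp, rfl⟩ := mem_image.1 (mem_filter.1 hP).1
    exact mem_inter.2 ⟨hA3 _ (mem_product.1 hp).1 e (he.trans inter_subset_left) hcard,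
      hB3 _ (mem_product.1 hp).2 e (he.trans inter_subset_right) hcard⟩
  · intro P hP
    exact (mem_filter.1 hP).2
  · -- the uncovered part
    have hsub : V \ C.biUnion id ⊆ (V \ FA.biUnion id) ∪ ((V \ FB.biUnion id) ∪ D) := by
      intro v hv
      obtain ⟨hvV, hvC⟩ := mem_sdiff.1 hv
      by_cases hA' : v ∈ FA.biUnion id
      · by_cases hB' : v ∈ FB.biUnion id
        · refine mem_union.2 (Or.inr (mem_union.2 (Or.inr ?_)))
          obtain ⟨P, hP, hvP⟩ := mem_biUnion.1 hA'
          obtain ⟨Q, hQ, hvQ⟩ := mem_biUnion.1 hB'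
          by_cases hkeep : η * μ ^ 2 * (V.card : ℝ) ≤ (((P ∩ Q).card : ℕ) : ℝ)
          · exfalso
            apply hvC
            refine mem_biUnion.2 ⟨P ∩ Q, ?_, mem_inter.2 ⟨hvP, hvQ⟩⟩
            exact mem_filter.2 ⟨mem_image.2 ⟨(P, Q), mem_product.2 ⟨hP, hQ⟩, rfl⟩, hkeep⟩
          · exact mem_biUnion.2 ⟨(P, Q), mem_filter.2 ⟨mem_product.2 ⟨hP, hQ⟩, hkeep⟩,
              mem_inter.2 ⟨hvP, hvQ⟩⟩
        · exact mem_union.2 (Or.inr (mem_union.2 (Or.inl (mem_sdiff.2 ⟨hvV, hB'⟩))))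
      · exact mem_union.2 (Or.inl (mem_sdiff.2 ⟨hvV, hA'⟩))
    have hDcard : ((D.card : ℕ) : ℝ) ≤ η * V.card := by
      have h1 : D.card ≤ ∑ p ∈ Ffil, (p.1 ∩ p.2).card := card_biUnion_le
      have h2 : (∑ p ∈ Ffil, ((p.1 ∩ p.2).card : ℝ)) ≤
          Ffil.card • (η * μ ^ 2 * (V.card : ℝ)) := by
        apply Finset.sum_le_card_nsmul
        intro p hp
        exact le_of_lt (lt_of_not_ge (mem_filter.1 hp).2)
      rw [nsmul_eq_mul] at h2
      have h3 : (Ffil.card : ℝ) ≤ (FA.card : ℝ) * FB.card := by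
        have := card_filter_le (FA ×ˢ FB)
          (fun p => ¬ η * μ ^ 2 * (V.card : ℝ) ≤ ((p.1 ∩ p.2).card : ℝ))
        rw [card_product] at this
        exact_mod_cast this
      have h4 : (Ffil.card : ℝ) * (η * μ ^ 2 * (V.card : ℝ)) ≤ η * V.card := by
        calc (Ffil.card : ℝ) * (η * μ ^ 2 * (V.card : ℝ))
            ≤ ((FA.card : ℝ) * FB.card) * (η * μ ^ 2 * (V.card : ℝ)) :=
              mul_le_mul_of_nonneg_right h3 (by positivity)
          _ ≤ η * V.card := key
      have h1' : ((D.card : ℕ) : ℝ) ≤ ∑ p ∈ Ffil, ((p.1 ∩ p.2).card : ℝ) := by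
        push_cast
        exact_mod_cast h1
      linarith
    calc ((V \ C.biUnion id).card : ℝ)
        ≤ (((V \ FA.biUnion id) ∪ ((V \ FB.biUnion id) ∪ D)).card : ℝ) := by
          exact_mod_cast card_le_card hsub
      _ ≤ ((V \ FA.biUnion id).card : ℝ) + (((V \ FB.biUnion id) ∪ D).card : ℝ) := by
          exact_mod_cast card_union_le _ _
      _ ≤ ((V \ FA.biUnion id).card : ℝ) + (((V \ FB.biUnion id).card : ℝ) + (D.card : ℝ)) := by
          have := card_union_le (V \ FB.biUnion id) D
          have : (((V \ FB.biUnion id) ∪ D).card : ℝ) ≤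
              ((V \ FB.biUnion id).card : ℝ) + (D.card : ℝ) := by exact_mod_cast this
          linarith
      _ ≤ η * V.card + (η * V.card + η * V.card) := by
          have := hDcard
          push_cast at this
          linarith [hA5, hB5]
      _ = 3 * η * V.card := by ring

lemma isGood_exists_mem {α : Type*} [DecidableEq α] {V : Finset α} {k : ℕ} {μ η : ℝ}
    {A : Finset (Finset α)} (hk : 1 ≤ k) (hη : η < 1) (hV : 0 < V.card)
    (hμV : ((k : ℝ) - 1) ≤ μ * V.card) (h : IsGood V k μ η A) :
    ∃ e ∈ A, e.card = k - 1 := by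
  obtain ⟨t, P, h1, h2, h3, h4, h5⟩ := h
  have hn : (0 : ℝ) < V.card := by exact_mod_cast hV
  rcases t with _ | t
  · exfalso
    have : (Finset.univ : Finset (Fin 0)).biUnion P = ∅ := by simp
    rw [this] at h5
    simp only [sdiff_empty] at h5
    nlinarith
  · have hi : ((k : ℝ) - 1) ≤ ((P 0).card : ℝ) := le_trans hμV (h4 0)
    have hk' : (k - 1 : ℕ) ≤ (P 0).card := by
      have : ((k - 1 : ℕ) : ℝ) ≤ ((P 0).card : ℝ) := by
        rwa [Nat.cast_sub hk, Nat.cast_one]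
      exact_mod_cast this
    obtain ⟨e, he, hcard⟩ := Finset.exists_subset_card_eq hk'
    exact ⟨e, h3 0 e he hcard, hcard⟩

lemma lemA (k : ℕ) : ∀ r : ℕ, ∀ μ η : ℝ, 0 < μ → 0 < η →
    ∃ μ' : ℝ, 0 < μ' ∧ ∀ (α : Type) [DecidableEq α] (V : Finset α)
      (𝒮 : Finset (Finset (Finset α))) (hne : 𝒮.Nonempty), 𝒮.card ≤ 2 ^ r →
      (∀ S ∈ 𝒮, IsGood V k μ η S) → IsGood V k μ' ((3 : ℝ) ^ r * η) (𝒮.inf' hne id) := by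
  intro r
  induction r with
  | zero =>
    intro μ η hμ hη
    refine ⟨μ, hμ, ?_⟩
    intro α _ V 𝒮 hne hcard hgood
    have h1 : 𝒮.card = 1 := le_antisymm (by simpa using hcard) (Finset.card_pos.2 hne)
    obtain ⟨S, rfl⟩ := Finset.card_eq_one.1 h1
    simp only [Finset.inf'_singleton, id]
    simpa using hgood S (mem_singleton_self S)
  | succ r ih =>
    intro μ η hμ hη
    obtain ⟨μ', hμ', H⟩ := ih μ η hμ hη
    refine ⟨min μ' ((3 : ℝ) ^ r * η * μ' ^ 2), lt_min hμ' (by positivity), ?_⟩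
    intro α _ V 𝒮 hne hcard hgood
    have h3η : (0 : ℝ) < (3 : ℝ) ^ r * η := by positivity
    rcases le_or_gt 𝒮.card (2 ^ r) with hle | hlt
    · have := H α V 𝒮 hne hle hgood
      refine isGood_mono (min_le_left _ _) ?_ this
      have : (3 : ℝ) ^ r ≤ (3 : ℝ) ^ (r + 1) := by
        apply pow_le_pow_right₀ (by norm_num) (Nat.le_succ r)
      nlinarith
    · obtain ⟨𝒮₁, hsub, hcard₁⟩ := Finset.exists_subset_card_eq hlt.le
      set 𝒮₂ := 𝒮 \ 𝒮₁ with h𝒮₂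
      have hcard₂ : 𝒮₂.card = 𝒮.card - 2 ^ r := by
        rw [h𝒮₂, card_sdiff_of_subset hsub, hcard₁]
      have h2r : (0:ℕ) < 2 ^ r := Nat.pow_pos (n := r) (by norm_num)
      have hpow : (2:ℕ) ^ (r + 1) = 2 ^ r + 2 ^ r := by ring
      have hne₁ : 𝒮₁.Nonempty := Finset.card_pos.1 (by omega)
      have hne₂ : 𝒮₂.Nonempty := Finset.card_pos.1 (by omega)
      have hle₂ : 𝒮₂.card ≤ 2 ^ r := by omega
      have hg₁ := H α V 𝒮₁ hne₁ (le_of_eq hcard₁) (fun S hS => hgood S (hsub hS))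
      have hg₂ := H α V 𝒮₂ hne₂ hle₂ (fun S hS => hgood S (sdiff_subset hS))
      have hinter := isGood_inter hμ' h3η hg₁ hg₂
      have hunion : 𝒮₁ ∪ 𝒮₂ = 𝒮 := Finset.union_sdiff_of_subset hsub
      have hinf : 𝒮.inf' hne id = (𝒮₁.inf' hne₁ id) ∩ (𝒮₂.inf' hne₂ id) := by
        rw [← Finset.inf_eq_inter, ← Finset.inf'_union hne₁ hne₂ id]
        congr 1
        exact hunion.symm
      rw [hinf]
      refine isGood_mono (min_le_right _ _) (le_of_eq (by ring)) hinter

theorem good_sets_inter_nonempty (k : ℕ) (hk : 2 ≤ k) (μ : ℝ) (hμ : 0 < μ)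
    (m : ℕ) (hm : 1 ≤ m) :
    ∃ n₀ : ℕ, ∀ (α : Type) [DecidableEq α] (V : Finset α)
      (S : Fin m → Finset (Finset α)),
      n₀ < V.card →
      (∀ i, IsGood V k μ ((3 : ℝ) ^ (-(Nat.clog 2 m : ℤ) - 1)) (S i)) →
      ∃ e : Finset α, ∀ i : Fin m, e ∈ S i := by
  classical
  set r := Nat.clog 2 m with hr
  set η : ℝ := (3 : ℝ) ^ (-(r : ℤ) - 1) with hηdef
  have hη : 0 < η := by positivity
  obtain ⟨μ', hμ', H⟩ := lemA k r μ η hμ hη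
  obtain ⟨n₀, hn₀⟩ := exists_nat_ge ((k : ℝ) / μ')
  refine ⟨n₀, ?_⟩
  intro α _ V S hV hgood
  set 𝒮 : Finset (Finset (Finset α)) := Finset.univ.image S with h𝒮
  have hne : 𝒮.Nonempty := by
    refine ⟨S ⟨0, by omega⟩, ?_⟩
    exact mem_image.2 ⟨⟨0, by omega⟩, mem_univ _, rfl⟩
  have hcard : 𝒮.card ≤ 2 ^ r := by
    calc 𝒮.card ≤ (Finset.univ : Finset (Fin m)).card := card_image_le
      _ = m := by simp
      _ ≤ 2 ^ r := Nat.le_pow_clog (by norm_num) m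
  have hgood' : ∀ T ∈ 𝒮, IsGood V k μ η T := by
    intro T hT
    obtain ⟨i, -, rfl⟩ := mem_image.1 hT
    exact hgood i
  have hg := H α V 𝒮 hne hcard hgood'
  have hval : (3 : ℝ) ^ r * η = 1 / 3 := by
    rw [hηdef, ← zpow_natCast (3 : ℝ) r, ← zpow_add₀ (by norm_num : (3:ℝ) ≠ 0)]
    have h9 : (r : ℤ) + (-(r : ℤ) - 1) = -1 := by ring
    rw [h9]
    norm_num
  rw [hval] at hg
  have hVpos : 0 < V.card := by omega
  have hμV : ((k : ℝ) - 1) ≤ μ' * V.card := by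
    have h1 : (k : ℝ) ≤ μ' * n₀ := by
      rw [div_le_iff₀ hμ'] at hn₀
      linarith [hn₀]
    have h2 : (n₀ : ℝ) ≤ V.card := by exact_mod_cast hV.le
    nlinarith
  obtain ⟨e, he, -⟩ := isGood_exists_mem (by omega) (by norm_num) hVpos hμV hg
  refine ⟨e, fun i => ?_⟩
  have hmem : S i ∈ 𝒮 := mem_image.2 ⟨i, mem_univ _, rfl⟩
  have h2 : 𝒮.inf' hne id ≤ id (S i) := Finset.inf'_le id hmem
  exact h2 he
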